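/- Let p be a prime, and let G be a simple graph on vertices v_1,…,v_n with maximum degree Δ, and suppose p > 2Δ²n and t < p. Then G is t-colorable if and only if the polynomial P(v) = ∏_{c}( ∏_{d ∈ N(v_c)} (v_c − v_d) · ∏_{l=t+1}^{p} (v_c − l) ) over Z_p is not identically zero as a function on Z_p^n, i.e., there exists α ∈ Z_p^n with P(α) ≢ 0 mod p. -/
import Mathlib


open MvPolynomial

/-- For a prime `p > 2Δ²n` and `0 < t < p`, a simple graph `G` on `n` vertices is
`t`-colorable iff the polynomial
`P = ∏_c (∏_{d ∈ N(c)} (v_c − v_d) · ∏_{l=t+1}^{p} (v_c − l))` over `ℤ/p`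
does not vanish identically as a function on `(ℤ/p)^n`. -/
theorem stmt4 {n : ℕ} (G : SimpleGraph (Fin n)) [DecidableRel G.Adj]
    (p t : ℕ) (hp : p.Prime) (hpbig : 2 * G.maxDegree ^ 2 * n < p)
    (ht : 0 < t) (htp : t < p) :
    G.Colorable t ↔
      ∃ α : Fin n → ZMod p,
        MvPolynomial.eval α
          (∏ c : Fin n,
            ((∏ d ∈ G.neighborFinset c, (X c - X d)) *
              ∏ l ∈ Finset.Icc (t + 1) p, (X c - C (l : ZMod p)))) ≠ 0 := by
  haveI := Fact.mk hp
  constructor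
  · rintro ⟨f⟩
    refine ⟨fun c => (((f c : ℕ) + 1 : ℕ) : ZMod p), ?_⟩
    simp only [map_prod, map_mul, map_sub, eval_X, eval_C]
    rw [Finset.prod_ne_zero_iff]
    intro c _
    apply mul_ne_zero
    · rw [Finset.prod_ne_zero_iff]
      intro d hd
      rw [sub_ne_zero]
      intro h
      have hadj : G.Adj c d := by simpa using hd
      apply f.valid hadj
      have h2 := (ZMod.natCast_eq_natCast_iff _ _ _).mp h
      have hc : (f c : ℕ) < t := (f c).2
      have hd' : (f d : ℕ) < t := (f d).2
      rw [Nat.ModEq, Nat.mod_eq_of_lt (by omega), Nat.mod_eq_of_lt (by omega)] at h2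
      exact Fin.ext (by omega)
    · rw [Finset.prod_ne_zero_iff]
      intro l hl
      rw [Finset.mem_Icc] at hl
      rw [sub_ne_zero]
      intro h
      have h2 := (ZMod.natCast_eq_natCast_iff _ _ _).mp h
      have hc : (f c : ℕ) < t := (f c).2
      rw [Nat.ModEq, Nat.mod_eq_of_lt (by omega)] at h2
      rcases eq_or_lt_of_le hl.2 with rfl | hlp
      · rw [Nat.mod_self] at h2; omega
      · rw [Nat.mod_eq_of_lt hlp] at h2; omega
  · rintro ⟨α, hα⟩
    simp only [map_prod, map_mul, map_sub, eval_X, eval_C] at hα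
    rw [Finset.prod_ne_zero_iff] at hα
    have key : ∀ c : Fin n, 1 ≤ (α c).val ∧ (α c).val ≤ t := by
      intro c
      obtain ⟨_, hc2⟩ := mul_ne_zero_iff.mp (hα c (Finset.mem_univ c))
      rw [Finset.prod_ne_zero_iff] at hc2
      have hvlt : (α c).val < p := (α c).val_lt
      constructor
      · by_contra h0
        have h0 : (α c).val = 0 := by omega
        have : α c = 0 := (ZMod.val_eq_zero _).mp h0
        refine hc2 p (Finset.mem_Icc.mpr ⟨by omega, le_rfl⟩) ?_
        simp [this, ZMod.natCast_self]
      · by_contra hgt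
        refine hc2 (α c).val (Finset.mem_Icc.mpr ⟨by omega, by omega⟩) ?_
        simp [ZMod.natCast_val, ZMod.cast_id]
    refine ⟨SimpleGraph.Coloring.mk
      (fun c => ⟨(α c).val - 1, by have := key c; omega⟩) ?_⟩
    intro c d hadj
    have hne : α c ≠ α d := by
      obtain ⟨hc1, _⟩ := mul_ne_zero_iff.mp (hα c (Finset.mem_univ c))
      rw [Finset.prod_ne_zero_iff] at hc1
      have := hc1 d (by simpa using hadj)
      rwa [sub_ne_zero] at this
    have hvne : (α c).val ≠ (α d).val := fun h => hne (ZMod.val_injective _ h)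
    have := key c; have := key d
    simp only [Ne, Fin.mk.injEq]
    omega
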